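/- Let n ≥ 2, 0 ≤ λ ≤ 1, and let χ(λ) = λ(|Ψ_n⟩⟨Ψ_n| − (I_n/n) ⊗ (I_n/n)) be the correlation part of the mixture of the maximally entangled state and the maximally mixed state on ℂ^n ⊗ ℂ^n. A density matrix ρ on ℂ^n satisfies that ρ ⊗ (I_n/n) + χ(λ) is positive semidefinite if and only if there exists a density matrix σ on ℂ^n such that ρ = λ·(I_n/n) + (1−λ)·σ. -/

import Mathlib

open Matrix
open scoped Kronecker ComplexOrder

/-- The maximally entangled state `Ψ_n = (1/√n) Σ_k e_k ⊗ e_k` on `ℂ^n ⊗ ℂ^n`. -/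
noncomputable def maxEntVec (n : ℕ) : Fin n × Fin n → ℂ :=
  fun p => if p.1 = p.2 then ((Real.sqrt n : ℂ))⁻¹ else 0

/-- The rank-one projection `|Ψ_n⟩⟨Ψ_n|`. -/
noncomputable def maxEntProj (n : ℕ) : Matrix (Fin n × Fin n) (Fin n × Fin n) ℂ :=
  Matrix.vecMulVec (maxEntVec n) (star (maxEntVec n))

/-- The maximally mixed state `I_n / n`. -/
noncomputable def maxMixed (n : ℕ) : Matrix (Fin n) (Fin n) ℂ := (n : ℂ)⁻¹ • 1

theorem quadKron (n : ℕ) (A B : Matrix (Fin n) (Fin n) ℂ) (v w : Fin n → ℂ) :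
    star (fun p : Fin n × Fin n => v p.1 * w p.2) ⬝ᵥ ((A ⊗ₖ B) *ᵥ fun p => v p.1 * w p.2)
      = (star v ⬝ᵥ A *ᵥ v) * (star w ⬝ᵥ B *ᵥ w) := by
  have h : ∀ p : Fin n × Fin n, ((A ⊗ₖ B) *ᵥ fun p => v p.1 * w p.2) p
      = (A *ᵥ v) p.1 * (B *ᵥ w) p.2 := by
    intro p
    simp only [Matrix.mulVec, dotProduct, kroneckerMap_apply, Fintype.sum_prod_type,
      Finset.sum_mul_sum]
    exact Finset.sum_congr rfl fun j _ => Finset.sum_congr rfl fun s _ => by ring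
  simp only [dotProduct, h, Pi.star_apply, star_mul', Fintype.sum_prod_type,
    Finset.sum_mul_sum]
  exact Finset.sum_congr rfl fun i _ => Finset.sum_congr rfl fun r _ => by ring

theorem smulPSD {m : Type*} [Fintype m] {A : Matrix m m ℂ} (hA : A.PosSemidef)
    {c : ℝ} (hc : 0 ≤ c) : ((c : ℂ) • A).PosSemidef := by
  refine posSemidef_iff_dotProduct_mulVec.mpr ⟨?_, ?_⟩
  · have := hA.1
    unfold Matrix.IsHermitian at *
    rw [conjTranspose_smul, this, Complex.star_def, Complex.conj_ofReal]
  · intro x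
    rw [smul_mulVec, dotProduct_smul, smul_eq_mul]
    exact mul_nonneg (by exact_mod_cast Complex.zero_le_real.2 hc) (hA.dotProduct_mulVec_nonneg x)

theorem kronCT {m p : Type*} [Fintype m] [Fintype p] (A : Matrix m m ℂ) (B : Matrix p p ℂ) :
    (A ⊗ₖ B)ᴴ = Aᴴ ⊗ₖ Bᴴ := by
  ext ⟨i,r⟩ ⟨j,s⟩
  simp [conjTranspose_apply, kroneckerMap_apply, star_mul', mul_comm]

theorem kronPSD {m p : Type*} [Fintype m] [Fintype p] [DecidableEq m] [DecidableEq p]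
    {A : Matrix m m ℂ} {B : Matrix p p ℂ} (hA : A.PosSemidef) (hB : B.PosSemidef) :
    (A ⊗ₖ B).PosSemidef := by
  exact hA.kronecker hB

theorem psdTraceZero {m : Type*} [Fintype m] [DecidableEq m] {A : Matrix m m ℂ}
    (hA : A.PosSemidef) (h : A.trace = 0) : A = 0 := by
  have hdiag : ∀ i, A i i = 0 := by
    have hnn : ∀ i : m, 0 ≤ A i i := by
      intro i
      have := hA.dotProduct_mulVec_nonneg (Pi.single i 1)
      simpa [Matrix.mulVec_single, dotProduct, Pi.single_apply, Finset.sum_ite_eq] using this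
    intro i
    exact (Finset.sum_eq_zero_iff_of_nonneg (fun i _ => hnn i)).mp h i (Finset.mem_univ i)
  ext i j
  have hz : star (Pi.single j 1 : m → ℂ) ⬝ᵥ A *ᵥ Pi.single j 1 = 0 := by
    simp [Matrix.mulVec_single, dotProduct, Pi.single_apply, hdiag]
  have h2 := (hA.dotProduct_mulVec_zero_iff (Pi.single j 1)).mp hz
  have h3 := congr_fun h2 i
  simpa [Matrix.mulVec_single] using h3

theorem vecMulVec_star_mulVec {m : Type*} [Fintype m] (u x : m → ℂ) :
    (Matrix.vecMulVec u (star u)) *ᵥ x = (star u ⬝ᵥ x) • u := by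
  ext p
  simp [Matrix.mulVec, Matrix.vecMulVec_apply, dotProduct, Finset.mul_sum, mul_comm,
    mul_left_comm]

theorem quadVecMulVec {m : Type*} [Fintype m] (u x : m → ℂ) :
    star x ⬝ᵥ (Matrix.vecMulVec u (star u)) *ᵥ x
      = star (star u ⬝ᵥ x) * (star u ⬝ᵥ x) := by
  rw [vecMulVec_star_mulVec, dotProduct_smul, smul_eq_mul]
  have : star x ⬝ᵥ u = star (star u ⬝ᵥ x) := by
    simp [dotProduct, star_sum, star_mul', mul_comm]
  rw [this]; exact mul_comm _ _

theorem maxEntProjPSD (n : ℕ) : (maxEntProj n).PosSemidef := by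
  refine posSemidef_iff_dotProduct_mulVec.mpr ⟨?_, ?_⟩
  · ext p q
    simp [maxEntProj, Matrix.vecMulVec_apply, conjTranspose_apply, star_mul', mul_comm]
  · intro x
    rw [maxEntProj, quadVecMulVec]
    exact star_mul_self_nonneg _

theorem maxMixedPSD (n : ℕ) : (maxMixed n).PosSemidef := by
  have h : maxMixed n = (((n : ℝ)⁻¹ : ℝ) : ℂ) • (1 : Matrix (Fin n) (Fin n) ℂ) := by
    unfold maxMixed; push_cast; rfl
  rw [h]
  exact smulPSD Matrix.PosSemidef.one (inv_nonneg.mpr (Nat.cast_nonneg n))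

theorem maxMixedTrace (n : ℕ) (hn : n ≠ 0) : (maxMixed n).trace = 1 := by
  have : (n : ℂ) ≠ 0 := Nat.cast_ne_zero.mpr hn
  simp [maxMixed, Matrix.trace_smul, Matrix.trace_one]
  field_simp

theorem maxMixedQuad (n : ℕ) (x : Fin n → ℂ) :
    star x ⬝ᵥ maxMixed n *ᵥ x = (n : ℂ)⁻¹ * (star x ⬝ᵥ x) := by
  simp [maxMixed, smul_mulVec, dotProduct_smul, Matrix.one_mulVec, smul_eq_mul]

theorem stmt0 (n : ℕ) (hn : 2 ≤ n) (lam : ℝ) (hlam0 : 0 ≤ lam) (hlam1 : lam ≤ 1)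
    (ρ : Matrix (Fin n) (Fin n) ℂ) (hρ : ρ.PosSemidef) (hρtr : ρ.trace = 1) :
    (ρ ⊗ₖ maxMixed n + (lam : ℂ) • (maxEntProj n - maxMixed n ⊗ₖ maxMixed n)).PosSemidef ↔
      ∃ σ : Matrix (Fin n) (Fin n) ℂ, σ.PosSemidef ∧ σ.trace = 1 ∧
        ρ = (lam : ℂ) • maxMixed n + ((1 - lam : ℝ) : ℂ) • σ := by
  have hn0 : (n : ℂ) ≠ 0 := Nat.cast_ne_zero.mpr (by omega)
  have hnR0 : (n : ℝ) ≠ 0 := Nat.cast_ne_zero.mpr (by omega)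
  constructor
  · intro hM
    -- key: ρ - (lam/n) • 1 is PSD
    set c : ℂ := (lam : ℂ) * (n : ℂ)⁻¹ with hc
    have key : (ρ - c • 1).PosSemidef := by
      refine posSemidef_iff_dotProduct_mulVec.mpr ⟨?_, ?_⟩
      · have h1 : (c • (1 : Matrix (Fin n) (Fin n) ℂ)).IsHermitian := by
          unfold Matrix.IsHermitian
          rw [conjTranspose_smul, conjTranspose_one]
          congr 1
          simp [hc, Complex.star_def, _root_.map_mul, Complex.conj_ofReal, map_inv₀, map_natCast]
        exact hρ.1.sub h1
      · intro v
        by_cases hv : v = 0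
        · simp [hv]
        · obtain ⟨i, hi⟩ := Function.ne_iff.mp hv
          have : Nontrivial (Fin n) := ⟨⟨⟨0, by omega⟩, ⟨1, by omega⟩, by simp [Fin.ext_iff]⟩⟩
          obtain ⟨j, hj⟩ := exists_ne i
          set w : Fin n → ℂ := Pi.single i (v j) - Pi.single j (v i) with hwdef
          have hw0 : w ≠ 0 := by
            intro h
            apply hi
            have := congr_fun h j
            simpa [hwdef, Pi.single_apply, hj, neg_eq_zero] using this
          have hsum : ∑ k, v k * w k = 0 := by
            simp only [hwdef, Pi.sub_apply, Pi.single_apply, mul_sub, mul_ite, mul_zero,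
              Finset.sum_sub_distrib, Finset.sum_ite_eq', Finset.mem_univ, if_true]
            ring
          set x : Fin n × Fin n → ℂ := fun p => v p.1 * w p.2 with hxdef
          have hx := hM.dotProduct_mulVec_nonneg x
          have hc0 : star (maxEntVec n) ⬝ᵥ x = 0 := by
            simp only [dotProduct, Pi.star_apply, maxEntVec, hxdef, Fintype.sum_prod_type,
              apply_ite (star : ℂ → ℂ), star_zero, ite_mul, zero_mul,
              Finset.sum_ite_eq, Finset.sum_ite_eq', Finset.mem_univ, if_true]
            calc ∑ k, star (((Real.sqrt n : ℝ) : ℂ))⁻¹ * (v k * w k)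
                = star (((Real.sqrt n : ℝ) : ℂ))⁻¹ * ∑ k, v k * w k := by
                  rw [Finset.mul_sum]
              _ = 0 := by rw [hsum, mul_zero]
          have hPq : star x ⬝ᵥ maxEntProj n *ᵥ x = 0 := by
            rw [maxEntProj, vecMulVec_star_mulVec, hc0, zero_smul, dotProduct_zero]
          have hQw_pos : 0 < star w ⬝ᵥ w := by
            refine lt_of_le_of_ne (dotProduct_star_self_nonneg w) ?_
            intro h
            exact hw0 (dotProduct_star_self_eq_zero.mp h.symm)
          set Qv : ℂ := star v ⬝ᵥ v
          set Qw : ℂ := star w ⬝ᵥ w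
          set Qρ : ℂ := star v ⬝ᵥ ρ *ᵥ v
          have hxexp : star x ⬝ᵥ (ρ ⊗ₖ maxMixed n
              + (lam : ℂ) • (maxEntProj n - maxMixed n ⊗ₖ maxMixed n)) *ᵥ x
              = Qρ * ((n : ℂ)⁻¹ * Qw)
                + (lam : ℂ) * (0 - ((n : ℂ)⁻¹ * Qv) * ((n : ℂ)⁻¹ * Qw)) := by
            rw [add_mulVec, dotProduct_add, smul_mulVec, dotProduct_smul, sub_mulVec,
              dotProduct_sub, hPq, smul_eq_mul]
            congr 2
            · rw [hxdef, quadKron, maxMixedQuad]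
            · rw [hxdef, quadKron, maxMixedQuad, maxMixedQuad]
          rw [hxexp] at hx
          -- Qw is a positive real
          obtain ⟨hre, him⟩ := Complex.lt_def.mp hQw_pos
          simp only [Complex.zero_re, Complex.zero_im] at hre him
          have hQwr : Qw = ((Qw.re : ℝ) : ℂ) := by
            apply Complex.ext <;> simp [← him]
          set r : ℝ := Qw.re
          have hr : 0 < r := hre
          set s : ℝ := (n : ℝ)⁻¹ * r with hs
          have hs0 : 0 < s := by positivity
          have hscast : (n : ℂ)⁻¹ * Qw = ((s : ℝ) : ℂ) := by
            rw [hQwr, hs]; push_cast; ring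
          have h1 : 0 ≤ (Qρ - c * Qv) * ((s : ℝ) : ℂ) := by
            refine le_of_le_of_eq hx ?_
            rw [← hscast, hc]; ring
          have h2 : 0 ≤ Qρ - c * Qv := by
            have hinv : (0 : ℂ) ≤ ((s⁻¹ : ℝ) : ℂ) := by
              rw [Complex.zero_le_real]; positivity
            have := mul_nonneg h1 hinv
            have heq : (Qρ - c * Qv) * ((s : ℝ) : ℂ) * ((s⁻¹ : ℝ) : ℂ) = Qρ - c * Qv := by
              have hsne : ((s : ℝ) : ℂ) ≠ 0 := by
                exact_mod_cast Complex.ofReal_ne_zero.mpr (ne_of_gt hs0)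
              rw [mul_assoc, ← Complex.ofReal_mul, mul_inv_cancel₀ hs0.ne', Complex.ofReal_one,
                mul_one]
            rwa [heq] at this
          have hgoal : star v ⬝ᵥ (ρ - c • 1) *ᵥ v = Qρ - c * Qv := by
            rw [sub_mulVec, dotProduct_sub, smul_mulVec, dotProduct_smul,
              Matrix.one_mulVec, smul_eq_mul]
          rw [hgoal]
          exact h2
    -- now split on lam = 1 or lam < 1
    rcases lt_or_eq_of_le hlam1 with hlt | heq
    · refine ⟨(((1 - lam)⁻¹ : ℝ) : ℂ) • (ρ - c • 1), ?_, ?_, ?_⟩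
      · exact smulPSD key (inv_nonneg.mpr (by linarith))
      · have htr : (ρ - c • 1).trace = ((1 - lam : ℝ) : ℂ) := by
          rw [trace_sub, trace_smul, trace_one, hρtr]
          simp only [hc, Fintype.card_fin, smul_eq_mul]
          push_cast
          field_simp
        have hne : (1 : ℂ) - (lam : ℂ) ≠ 0 := by
          intro h
          have : (lam : ℂ) = 1 := by linear_combination -h
          have : lam = 1 := by exact_mod_cast this
          linarith
        rw [trace_smul, htr, smul_eq_mul]
        push_cast
        exact inv_mul_cancel₀ hne
      · have h1 : ((1 - lam : ℝ) : ℂ) • ((((1 - lam)⁻¹ : ℝ) : ℂ) • (ρ - c • 1)) = ρ - c • 1 := by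
          rw [smul_smul]
          have hne : (1 : ℂ) - (lam : ℂ) ≠ 0 := by
            intro h
            have : (lam : ℂ) = 1 := by linear_combination -h
            have : lam = 1 := by exact_mod_cast this
            linarith
          have : ((1 - lam : ℝ) : ℂ) * (((1 - lam)⁻¹ : ℝ) : ℂ) = 1 := by
            push_cast
            exact mul_inv_cancel₀ hne
          rw [this, one_smul]
        rw [h1]
        have h2 : (lam : ℂ) • maxMixed n = c • (1 : Matrix (Fin n) (Fin n) ℂ) := by
          rw [maxMixed, smul_smul, hc]
        rw [h2]
        abel
    · -- lam = 1
      subst heq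
      have hcn : c = (n : ℂ)⁻¹ := by rw [hc]; push_cast; ring
      have htr0 : (ρ - c • 1).trace = 0 := by
        rw [trace_sub, trace_smul, trace_one, hρtr, hcn]
        simp only [Fintype.card_fin, smul_eq_mul]
        field_simp
        simp
      have hρeq : ρ = maxMixed n := by
        have := psdTraceZero key htr0
        have h2 : ρ = c • 1 := by
          have := sub_eq_zero.mp this
          exact this
        rw [h2, hcn, maxMixed]
      refine ⟨maxMixed n, maxMixedPSD n, maxMixedTrace n (by omega), ?_⟩
      rw [hρeq]
      norm_num
  · rintro ⟨σ, hσ, hσtr, rfl⟩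
    have hkey : ((lam : ℂ) • maxMixed n + ((1 - lam : ℝ) : ℂ) • σ) ⊗ₖ maxMixed n
        + (lam : ℂ) • (maxEntProj n - maxMixed n ⊗ₖ maxMixed n)
        = ((1 - lam : ℝ) : ℂ) • (σ ⊗ₖ maxMixed n) + (lam : ℂ) • maxEntProj n := by
      rw [add_kronecker, smul_kronecker, smul_kronecker, smul_sub]
      abel
    rw [hkey]
    exact Matrix.PosSemidef.add
      (smulPSD (kronPSD hσ (maxMixedPSD n)) (by linarith))
      (smulPSD (maxEntProjPSD n) hlam0)
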